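/- Let I be a compact interval in the real line and let f : I → I be a continuous chaotic map. Then for every fixed point z of f and every nonempty open set W ⊆ I there exists a point c ∈ W such that the ω-limit set ω(f, c) contains z and also contains a point different from z. -/
import Mathlib

open Filter

/-- The ω-limit set of `c` under `f`: all `x` such that `f^[nₖ] c → x` for some
sequence of positive integers `nₖ → ∞`. -/
def omegaLimitSet (f : ℝ → ℝ) (c : ℝ) : Set ℝ :=
  {x | ∃ nk : ℕ → ℕ, (∀ k, 0 < nk k) ∧ Tendsto nk atTop atTop ∧
    Tendsto (fun k => f^[nk k] c) atTop (nhds x)}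

/-- If a continuous self-map `f` of a compact interval `[a,b]` is chaotic, then
for every fixed point `z` of `f` and every nonempty (relatively) open subset `W`
of `[a,b]` there exists `c ∈ W` whose ω-limit set contains `z` and also contains
a point different from `z`. -/
theorem chaotic_omega_limit_contains_fixed_point_and_more
    (a b : ℝ) (hab : a ≤ b) (f : ℝ → ℝ)
    (hmap : Set.MapsTo f (Set.Icc a b) (Set.Icc a b))
    (hcont : ContinuousOn f (Set.Icc a b))
    (hchaos : ∃ δ : ℝ, 0 < δ ∧
      ∀ x ∈ Set.Icc a b, ∀ V : Set ℝ, V ⊆ Set.Icc a b →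
        (∃ U : Set ℝ, IsOpen U ∧ V = Set.Icc a b ∩ U) → V.Nonempty →
        ∃ y ∈ V,
          δ ≤ limsup (fun n => |f^[n] x - f^[n] y|) atTop ∧
          liminf (fun n => |f^[n] x - f^[n] y|) atTop = 0)
    (z : ℝ) (hz : z ∈ Set.Icc a b) (hfz : f z = z)
    (W : Set ℝ) (hWsub : W ⊆ Set.Icc a b)
    (hWopen : ∃ U : Set ℝ, IsOpen U ∧ W = Set.Icc a b ∩ U)
    (hWne : W.Nonempty) :
    ∃ c ∈ W, z ∈ omegaLimitSet f c ∧ ∃ w ∈ omegaLimitSet f c, w ≠ z := by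
  obtain ⟨δ, hδ, hch⟩ := hchaos
  obtain ⟨y, hyW, hsup, hinf⟩ := hch z hz W hWsub hWopen hWne
  have hziter : ∀ n, f^[n] z = z := fun n => Function.iterate_fixed hfz n
  have hyI : y ∈ Set.Icc a b := hWsub hyW
  have hiterI : ∀ n, f^[n] y ∈ Set.Icc a b := fun n => hmap.iterate n hyI
  set g : ℕ → ℝ := fun n => |f^[n] z - f^[n] y| with hg
  have hg' : ∀ n, g n = |z - f^[n] y| := fun n => by simp [hg, hziter n]
  have hbdd_ge : IsBoundedUnder (· ≥ ·) atTop g :=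
    isBoundedUnder_of ⟨0, fun n => abs_nonneg _⟩
  have hbdd_le : IsBoundedUnder (· ≤ ·) atTop g :=
    isBoundedUnder_of ⟨b - a, fun n => by
      have h1 := hmap.iterate n hz
      have h2 := hiterI n
      simp only [g]
      rw [abs_sub_le_iff]
      obtain ⟨ha1, hb1⟩ := h1; obtain ⟨ha2, hb2⟩ := h2
      constructor <;> linarith⟩
  refine ⟨y, hyW, ?_, ?_⟩
  · -- z ∈ ω(f, y)
    have hfreq : ∀ k : ℕ, ∃ᶠ n in atTop, g n < 1 / (k + 1) := by
      intro k
      refine frequently_lt_of_liminf_lt hbdd_le.isCoboundedUnder_ge ?_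
      rw [hinf]
      positivity
    obtain ⟨φ, hφmono, hφ⟩ := extraction_forall_of_frequently hfreq
    refine ⟨fun k => φ (k + 1), fun k => lt_of_lt_of_le (Nat.succ_pos k) (hφmono.le_apply),
      (hφmono.tendsto_atTop).comp (tendsto_add_atTop_nat 1), ?_⟩
    rw [tendsto_iff_dist_tendsto_zero]
    refine squeeze_zero (fun k => dist_nonneg) (fun k => ?_)
      (Filter.Tendsto.comp tendsto_one_div_add_atTop_nhds_zero_nat (tendsto_add_atTop_nat 1))
    have := hφ (k + 1)
    rw [hg'] at this
    have : |z - f^[φ (k + 1)] y| ≤ 1 / (k + 1 + 1) := by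
      refine le_trans this.le (by norm_num)
    calc dist (f^[φ (k + 1)] y) z = |z - f^[φ (k + 1)] y| := by
          rw [Real.dist_eq, abs_sub_comm]
      _ ≤ 1 / (↑(k + 1) + 1) := by push_cast; linarith
  · -- some w ≠ z in ω(f, y)
    have hfreq2 : ∀ k : ℕ, ∃ᶠ n in atTop, δ / 2 < g n := by
      intro _
      refine frequently_lt_of_lt_limsup hbdd_ge.isCoboundedUnder_le ?_
      exact lt_of_lt_of_le (by linarith) hsup
    obtain ⟨φ, hφmono, hφ⟩ := extraction_forall_of_frequently hfreq2
    obtain ⟨w, hwI, ψ, hψmono, hψ⟩ := isCompact_Icc.tendsto_subseq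
      (x := fun k => f^[φ (k + 1)] y) (fun k => hiterI _)
    have hlim : Tendsto (fun k => f^[φ (ψ k + 1)] y) atTop (nhds w) := hψ
    have habs : Tendsto (fun k => |z - f^[φ (ψ k + 1)] y|) atTop (nhds (|z - w|)) :=
      (tendsto_const_nhds.sub hlim).abs
    have hge : δ / 2 ≤ |z - w| := by
      refine ge_of_tendsto habs (Eventually.of_forall fun k => ?_)
      have := hφ (ψ k + 1)
      rw [hg'] at this
      exact this.le
    have hnk : Tendsto (fun k => φ (ψ k + 1)) atTop atTop :=
      hφmono.tendsto_atTop.comp ((tendsto_add_atTop_nat 1).comp hψmono.tendsto_atTop)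
    refine ⟨w, ⟨fun k => φ (ψ k + 1),
      fun k => lt_of_lt_of_le (Nat.succ_pos _) hφmono.le_apply, hnk, hlim⟩, ?_⟩
    intro h
    rw [h] at hge
    simp at hge
    linarith
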